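/- Define E = a^{-1} U_R² + a U_θ² and 𝓔(R) = ∫_{S¹} E dθ. Suppose U, a, η are smooth on [R₀,∞) × S¹ and satisfy (R a^{-1} U_R)_R − (R a U_θ)_θ = 0 and (2 ln a)_R = −(K²/R³) e^{2η}. Then d𝓔/dR = −(K²/(2R³)) ∫_{S¹} E e^{2η} dθ − (2/R) ∫_{S¹} a^{-1} U_R² dθ. In particular 𝓔 is non-increasing. -/

import Mathlib

open Real MeasureTheory intervalIntegral

private lemma pd1 {f : ℝ × ℝ → ℝ} (hf : Differentiable ℝ f) (R θ : ℝ) :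
    HasDerivAt (fun r => f (r, θ)) (fderiv ℝ f (R, θ) (1, 0)) R :=
  (hf (R, θ)).hasFDerivAt.comp_hasDerivAt R ((hasDerivAt_id R).prodMk (hasDerivAt_const R θ))

private lemma pd2 {f : ℝ × ℝ → ℝ} (hf : Differentiable ℝ f) (R θ : ℝ) :
    HasDerivAt (fun t => f (R, t)) (fderiv ℝ f (R, θ) (0, 1)) θ :=
  (hf (R, θ)).hasFDerivAt.comp_hasDerivAt θ ((hasDerivAt_const θ R).prodMk (hasDerivAt_id θ))

private lemma pdSmooth {f : ℝ × ℝ → ℝ} (hf : ContDiff ℝ (⊤ : ℕ∞) f) (v : ℝ × ℝ) :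
    ContDiff ℝ (⊤ : ℕ∞) (fun p => fderiv ℝ f p v) :=
  (hf.fderiv_right (m := (⊤:ℕ∞)) (by norm_cast)).clm_apply contDiff_const

private lemma pdPeriodic {f : ℝ × ℝ → ℝ} (hf : Differentiable ℝ f) (c : ℝ × ℝ)
    (hper : ∀ x, f (x + c) = f x) (p : ℝ × ℝ) :
    fderiv ℝ f (p + c) = fderiv ℝ f p := by
  have h1 : HasFDerivAt (fun x : ℝ × ℝ => f (x + c))
      ((fderiv ℝ f (p + c)).comp (ContinuousLinearMap.id ℝ (ℝ × ℝ))) p :=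
    (hf (p + c)).hasFDerivAt.comp p ((hasFDerivAt_id p).add_const c)
  rw [ContinuousLinearMap.comp_id] at h1
  have h2 : (fun x : ℝ × ℝ => f (x + c)) = f := funext hper
  rw [h2] at h1
  exact (h1.fderiv).symm

private lemma pdSymm {f : ℝ × ℝ → ℝ} (hf : ContDiff ℝ (⊤ : ℕ∞) f) (p v w : ℝ × ℝ) :
    fderiv ℝ (fun q => fderiv ℝ f q v) p w = fderiv ℝ (fun q => fderiv ℝ f q w) p v := by
  have hd : Differentiable ℝ (fderiv ℝ f) :=
    (hf.fderiv_right (m := (⊤:ℕ∞)) (by norm_cast)).differentiable (by norm_cast)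
  have hmix : ∀ u : ℝ × ℝ, (fderiv ℝ (fun q => fderiv ℝ f q u) p : (ℝ × ℝ) →L[ℝ] ℝ)
      = (fderiv ℝ (fderiv ℝ f) p).flip u := by
    intro u
    rw [fderiv_clm_apply (hd p) (differentiableAt_const u)]
    simp
  rw [hmix v, hmix w]
  have hsym := (hf.of_le (show (2 : WithTop ℕ∞) ≤ ((⊤:ℕ∞) : WithTop ℕ∞) by norm_cast)).contDiffAt.isSymmSndFDerivAt (x := p) (by simp)
  simpa [ContinuousLinearMap.flip_apply] using (hsym w v)

private lemma scalar_key (Rv Av A1v A2v u1 u2 u11 u12 u22 e Kv : ℝ)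
    (hA : Av ≠ 0) (hR : Rv ≠ 0)
    (hw : (1 * Av⁻¹ + Rv * (-A1v / Av ^ 2)) * u1 + Rv * Av⁻¹ * u11
        = (0 * Av + Rv * A2v) * u2 + Rv * Av * u22)
    (hA1 : 2 * (A1v / Av) = -(Kv ^ 2 / Rv ^ 3) * e) :
    -A1v / Av ^ 2 * u1 ^ 2 + Av⁻¹ * (2 * u1 ^ 1 * u11) + (A1v * u2 ^ 2 + Av * (2 * u2 ^ 1 * u12))
      = (((2 * u12) * Av + (2 * u1) * A2v) * u2 + ((2 * u1) * Av) * u22)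
        + (-(Kv ^ 2 / (2 * Rv ^ 3)) * ((Av⁻¹ * u1 ^ 2 + Av * u2 ^ 2) * e)
          - 2 / Rv * (Av⁻¹ * u1 ^ 2)) := by
  have hA1' : A1v = -(Kv ^ 2 / (2 * Rv ^ 3)) * e * Av := by
    field_simp at hA1 ⊢
    linarith
  subst hA1'
  have hw' : u11 = (Av / Rv) * ((0 * Av + Rv * A2v) * u2 + Rv * Av * u22
      - (1 * Av⁻¹ + Rv * (-(-(Kv ^ 2 / (2 * Rv ^ 3)) * e * Av) / Av ^ 2)) * u1) := by
    field_simp at hw ⊢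
    linarith
  subst hw'
  field_simp
  ring
/-- Energy identity for the polarized `T²`-symmetric equations: with
`E = a⁻¹U_R² + aU_θ²` and `𝓔(R) = ∫_{S¹} E dθ`, one has
`d𝓔/dR = −(K²/(2R³)) ∫ E e^{2η} − (2/R) ∫ a⁻¹ U_R²`; in particular `𝓔` is
non-increasing. -/
theorem energy_identity
    (K R₀ : ℝ) (hR₀ : 0 < R₀)
    (U a η : ℝ → ℝ → ℝ)
    (hU : ContDiff ℝ (⊤ : ℕ∞) (fun p : ℝ × ℝ => U p.1 p.2))
    (ha : ContDiff ℝ (⊤ : ℕ∞) (fun p : ℝ × ℝ => a p.1 p.2))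
    (hη : ContDiff ℝ (⊤ : ℕ∞) (fun p : ℝ × ℝ => η p.1 p.2))
    (hapos : ∀ R θ, 0 < a R θ)
    (hUper : ∀ R, Function.Periodic (U R) (2 * π))
    (haper : ∀ R, Function.Periodic (a R) (2 * π))
    (hηper : ∀ R, Function.Periodic (η R) (2 * π))
    (hwave : ∀ R ∈ Set.Ici R₀, ∀ θ,
      deriv (fun r => r * (a r θ)⁻¹ * deriv (fun r' => U r' θ) r) R
        = deriv (fun t => R * a R t * deriv (U R) t) θ)
    (haeq : ∀ R ∈ Set.Ici R₀, ∀ θ,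
      deriv (fun r => 2 * Real.log (a r θ)) R = -(K ^ 2 / R ^ 3) * Real.exp (2 * η R θ))
    (E : ℝ → ℝ → ℝ)
    (hE : ∀ R θ, E R θ
      = (a R θ)⁻¹ * (deriv (fun r => U r θ) R) ^ 2 + a R θ * (deriv (U R) θ) ^ 2)
    (𝓔 : ℝ → ℝ) (h𝓔 : ∀ R, 𝓔 R = ∫ θ in (0:ℝ)..(2 * π), E R θ) :
    (∀ R ∈ Set.Ici R₀,
      deriv 𝓔 R
        = -(K ^ 2 / (2 * R ^ 3)) * (∫ θ in (0:ℝ)..(2 * π), E R θ * Real.exp (2 * η R θ))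
          - (2 / R) * ∫ θ in (0:ℝ)..(2 * π), (a R θ)⁻¹ * (deriv (fun r => U r θ) R) ^ 2)
    ∧ AntitoneOn 𝓔 (Set.Ici R₀) := by
  -- uncurried functions
  set F : ℝ × ℝ → ℝ := fun p => U p.1 p.2 with hFdef
  set A : ℝ × ℝ → ℝ := fun p => a p.1 p.2 with hAdef
  have hFd : Differentiable ℝ F := hU.differentiable (by norm_cast)
  have hAd : Differentiable ℝ A := ha.differentiable (by norm_cast)
  have hApos : ∀ p : ℝ × ℝ, 0 < A p := fun p => hapos p.1 p.2
  have hAne : ∀ p : ℝ × ℝ, A p ≠ 0 := fun p => (hApos p).ne'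
  -- first partials
  set U1 : ℝ × ℝ → ℝ := fun p => fderiv ℝ F p (1, 0) with hU1def
  set U2 : ℝ × ℝ → ℝ := fun p => fderiv ℝ F p (0, 1) with hU2def
  set A1 : ℝ × ℝ → ℝ := fun p => fderiv ℝ A p (1, 0) with hA1def
  set A2 : ℝ × ℝ → ℝ := fun p => fderiv ℝ A p (0, 1) with hA2def
  have hU1s : ContDiff ℝ (⊤ : ℕ∞) U1 := pdSmooth hU _
  have hU2s : ContDiff ℝ (⊤ : ℕ∞) U2 := pdSmooth hU _
  have hU1d : Differentiable ℝ U1 := hU1s.differentiable (by norm_cast)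
  have hU2d : Differentiable ℝ U2 := hU2s.differentiable (by norm_cast)
  -- second partials
  set U1R : ℝ × ℝ → ℝ := fun p => fderiv ℝ U1 p (1, 0) with hU1Rdef
  set U1T : ℝ × ℝ → ℝ := fun p => fderiv ℝ U1 p (0, 1) with hU1Tdef
  set U2R : ℝ × ℝ → ℝ := fun p => fderiv ℝ U2 p (1, 0) with hU2Rdef
  set U2T : ℝ × ℝ → ℝ := fun p => fderiv ℝ U2 p (0, 1) with hU2Tdef
  have hsym : ∀ p, U2R p = U1T p := fun p => pdSymm hU p (0,1) (1,0)
  -- deriv rewrites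
  have hdU1 : ∀ R θ, deriv (fun r => U r θ) R = U1 (R, θ) := fun R θ => (pd1 hFd R θ).deriv
  have hdU2 : ∀ R θ, deriv (U R) θ = U2 (R, θ) := fun R θ => (pd2 hFd R θ).deriv
  -- energy density, uncurried
  set Eu : ℝ × ℝ → ℝ := fun p => (A p)⁻¹ * (U1 p) ^ 2 + A p * (U2 p) ^ 2 with hEudef
  have hEEu : ∀ R θ, E R θ = Eu (R, θ) := by
    intro R θ; rw [hE, hdU1, hdU2]
  have hEus : ContDiff ℝ (⊤ : ℕ∞) Eu :=
    ((ha.inv hAne).mul (hU1s.pow 2)).add (ha.mul (hU2s.pow 2))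
  have hEud : Differentiable ℝ Eu := hEus.differentiable (by norm_cast)
  set D : ℝ × ℝ → ℝ := fun p => fderiv ℝ Eu p (1, 0) with hDdef
  have hDc : Continuous D := (pdSmooth hEus _).continuous
  -- 𝓔 as parametric integral
  have h𝓔' : 𝓔 = fun x => ∫ θ in (0:ℝ)..(2 * π), Eu (x, θ) := by
    funext x
    rw [h𝓔]
    exact intervalIntegral.integral_congr fun θ _ => hEEu x θ
  -- differentiation under the integral sign
  have key : ∀ R : ℝ, HasDerivAt 𝓔 (∫ θ in (0:ℝ)..(2 * π), D (R, θ)) R := by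
    intro R
    rw [h𝓔']
    have hKcpt : IsCompact ((Metric.closedBall R 1) ×ˢ (Set.uIcc (0:ℝ) (2 * π))) :=
      (isCompact_closedBall R 1).prod isCompact_uIcc
    obtain ⟨C, hC⟩ := hKcpt.exists_bound_of_continuousOn hDc.continuousOn
    have hmem : ∀ x ∈ Metric.ball R 1, ∀ t ∈ Set.uIoc (0:ℝ) (2 * π),
        ((x, t) : ℝ × ℝ) ∈ (Metric.closedBall R 1) ×ˢ (Set.uIcc (0:ℝ) (2 * π)) := by
      intro x hx t ht
      exact ⟨Metric.ball_subset_closedBall hx, Set.uIoc_subset_uIcc ht⟩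
    have := intervalIntegral.hasDerivAt_integral_of_dominated_loc_of_deriv_le
      (F := fun x t => Eu (x, t)) (F' := fun x t => D (x, t)) (x₀ := R)
      (a := (0:ℝ)) (b := 2 * π) (bound := fun _ => C) (μ := MeasureTheory.volume)
      (Metric.ball_mem_nhds R one_pos)
      (Filter.Eventually.of_forall fun x =>
        ((hEus.continuous.comp (continuous_const.prodMk continuous_id)).aestronglyMeasurable))
      ((hEus.continuous.comp (continuous_const.prodMk continuous_id)).intervalIntegrable _ _)
      ((hDc.comp (continuous_const.prodMk continuous_id)).aestronglyMeasurable)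
      (MeasureTheory.ae_of_all _ fun t ht x hx => hC (x, t) (hmem x hx t ht))
      (intervalIntegrable_const)
      (MeasureTheory.ae_of_all _ fun t ht x hx => pd1 hEud x t)
    exact this.2
  -- pointwise identity
  have hpoint : ∀ R ∈ Set.Ici R₀, ∀ θ : ℝ,
      D (R, θ) = (((2 * U1T (R, θ)) * A (R, θ) + (2 * U1 (R, θ)) * A2 (R, θ)) * U2 (R, θ)
            + ((2 * U1 (R, θ)) * A (R, θ)) * U2T (R, θ))
          + (-(K ^ 2 / (2 * R ^ 3)) * (Eu (R, θ) * Real.exp (2 * η R θ))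
            - (2 / R) * ((A (R, θ))⁻¹ * (U1 (R, θ)) ^ 2)) := by
    intro R hR θ
    have hRpos : 0 < R := lt_of_lt_of_le hR₀ hR
    have hRne : R ≠ 0 := hRpos.ne'
    -- the equation for a
    have hlog : HasDerivAt (fun r => 2 * Real.log (a r θ)) (2 * (A1 (R, θ) / A (R, θ))) R :=
      ((pd1 hAd R θ).log (hAne _)).const_mul 2
    have hA1eq : 2 * (A1 (R, θ) / A (R, θ)) = -(K ^ 2 / R ^ 3) * Real.exp (2 * η R θ) :=
      hlog.deriv.symm.trans (haeq R hR θ)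
    -- the wave equation
    have hfun1 : (fun r => r * (a r θ)⁻¹ * deriv (fun r' => U r' θ) r)
        = (fun r => r * (A (r, θ))⁻¹ * U1 (r, θ)) := by
      funext r; rw [hdU1]
    have hfun2 : (fun t => R * a R t * deriv (U R) t)
        = (fun t => R * A (R, t) * U2 (R, t)) := by
      funext t; rw [hdU2]
    have hw0 := hwave R hR θ
    rw [hfun1, hfun2] at hw0
    have hL : HasDerivAt (fun r => r * (A (r, θ))⁻¹ * U1 (r, θ))
        ((1 * (A (R, θ))⁻¹ + R * (-A1 (R, θ) / A (R, θ) ^ 2)) * U1 (R, θ)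
          + R * (A (R, θ))⁻¹ * U1R (R, θ)) R :=
      ((hasDerivAt_id R).mul ((pd1 hAd R θ).inv (hAne _))).mul (pd1 hU1d R θ)
    have hRt : HasDerivAt (fun t => R * A (R, t) * U2 (R, t))
        ((0 * A (R, θ) + R * A2 (R, θ)) * U2 (R, θ) + R * A (R, θ) * U2T (R, θ)) θ :=
      ((hasDerivAt_const θ R).mul (pd2 hAd R θ)).mul (pd2 hU2d R θ)
    have hwv : (1 * (A (R, θ))⁻¹ + R * (-A1 (R, θ) / A (R, θ) ^ 2)) * U1 (R, θ)
          + R * (A (R, θ))⁻¹ * U1R (R, θ)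
        = (0 * A (R, θ) + R * A2 (R, θ)) * U2 (R, θ) + R * A (R, θ) * U2T (R, θ) := by
      rw [← hL.deriv, ← hRt.deriv]; exact hw0
    -- compute D
    have hDa : HasDerivAt (fun r => Eu (r, θ))
        (-A1 (R, θ) / A (R, θ) ^ 2 * U1 (R, θ) ^ 2
            + (A (R, θ))⁻¹ * (2 * U1 (R, θ) ^ 1 * U1R (R, θ))
          + (A1 (R, θ) * U2 (R, θ) ^ 2 + A (R, θ) * (2 * U2 (R, θ) ^ 1 * U2R (R, θ)))) R :=
      (((pd1 hAd R θ).inv (hAne _)).mul ((pd1 hU1d R θ).pow 2)).add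
        ((pd1 hAd R θ).mul ((pd1 hU2d R θ).pow 2))
    have hDval : D (R, θ)
        = -A1 (R, θ) / A (R, θ) ^ 2 * U1 (R, θ) ^ 2
            + (A (R, θ))⁻¹ * (2 * U1 (R, θ) ^ 1 * U1R (R, θ))
          + (A1 (R, θ) * U2 (R, θ) ^ 2 + A (R, θ) * (2 * U2 (R, θ) ^ 1 * U2R (R, θ))) :=
      (pd1 hEud R θ).unique hDa
    rw [hsym (R, θ)] at hDval
    rw [hDval]
    exact scalar_key R (A (R, θ)) (A1 (R, θ)) (A2 (R, θ)) (U1 (R, θ)) (U2 (R, θ))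
      (U1R (R, θ)) (U1T (R, θ)) (U2T (R, θ)) (Real.exp (2 * η R θ)) K
      (hAne _) hRne hwv hA1eq
  -- the derivative formula
  have hformula : ∀ R ∈ Set.Ici R₀,
      deriv 𝓔 R
        = -(K ^ 2 / (2 * R ^ 3)) * (∫ θ in (0:ℝ)..(2 * π), E R θ * Real.exp (2 * η R θ))
          - (2 / R) * ∫ θ in (0:ℝ)..(2 * π), (a R θ)⁻¹ * (deriv (fun r => U r θ) R) ^ 2 := by
    intro R hR
    -- periodicity of the partial derivatives
    have hFper : ∀ x : ℝ × ℝ, F (x + ((0:ℝ), 2 * π)) = F x := by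
      intro x
      show U (x.1 + 0) (x.2 + 2 * π) = U x.1 x.2
      rw [add_zero]; exact hUper x.1 x.2
    have hAper' : ∀ x : ℝ × ℝ, A (x + ((0:ℝ), 2 * π)) = A x := by
      intro x
      show a (x.1 + 0) (x.2 + 2 * π) = a x.1 x.2
      rw [add_zero]; exact haper x.1 x.2
    have hptrans : ∀ t : ℝ, ((R, t) + ((0:ℝ), 2 * π)) = (R, t + 2 * π) := by
      intro t; simp
    have hper1 : ∀ t, U1 (R, t + 2 * π) = U1 (R, t) := by
      intro t
      have h := pdPeriodic hFd _ hFper (R, t)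
      rw [hptrans t] at h
      show fderiv ℝ F (R, t + 2 * π) (1, 0) = fderiv ℝ F (R, t) (1, 0)
      rw [h]
    have hper2 : ∀ t, U2 (R, t + 2 * π) = U2 (R, t) := by
      intro t
      have h := pdPeriodic hFd _ hFper (R, t)
      rw [hptrans t] at h
      show fderiv ℝ F (R, t + 2 * π) (0, 1) = fderiv ℝ F (R, t) (0, 1)
      rw [h]
    have hperA : ∀ t, A (R, t + 2 * π) = A (R, t) := by
      intro t
      have h := pdPeriodic hAd _ hAper' (R, t)
      rw [hptrans t] at h
      exact hAper' (R, t) |>.symm ▸ (by rw [← hptrans t, hAper'])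
    -- continuity of everything in sight
    have hcomp : ∀ {g : ℝ × ℝ → ℝ}, Continuous g → Continuous fun t : ℝ => g (R, t) :=
      fun hg => hg.comp (continuous_const.prodMk continuous_id)
    have cU1 : Continuous fun t => U1 (R, t) := hcomp hU1s.continuous
    have cU2 : Continuous fun t => U2 (R, t) := hcomp hU2s.continuous
    have cA : Continuous fun t => A (R, t) := hcomp ha.continuous
    have cA2 : Continuous fun t => A2 (R, t) := hcomp (pdSmooth ha (0, 1)).continuous
    have cU1T : Continuous fun t => U1T (R, t) := hcomp (pdSmooth hU1s (0, 1)).continuous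
    have cU2T : Continuous fun t => U2T (R, t) := hcomp (pdSmooth hU2s (0, 1)).continuous
    have cAinv : Continuous fun t => (A (R, t))⁻¹ := cA.inv₀ fun t => hAne (R, t)
    have cexp : Continuous fun t => Real.exp (2 * η R t) :=
      Real.continuous_exp.comp (continuous_const.mul (hcomp hη.continuous))
    have cEu : Continuous fun t => Eu (R, t) := hcomp hEus.continuous
    have cGD : Continuous (fun θ => ((2 * U1T (R, θ)) * A (R, θ)
          + (2 * U1 (R, θ)) * A2 (R, θ)) * U2 (R, θ)
        + ((2 * U1 (R, θ)) * A (R, θ)) * U2T (R, θ)) :=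
      ((((continuous_const.mul cU1T).mul cA).add ((continuous_const.mul cU1).mul cA2)).mul cU2).add
        (((continuous_const.mul cU1).mul cA).mul cU2T)
    have cf1 : Continuous fun θ => -(K ^ 2 / (2 * R ^ 3)) * (Eu (R, θ) * Real.exp (2 * η R θ)) :=
      continuous_const.mul (cEu.mul cexp)
    have cf2 : Continuous fun θ => (2 / R) * ((A (R, θ))⁻¹ * (U1 (R, θ)) ^ 2) :=
      continuous_const.mul (cAinv.mul (cU1.pow 2))
    -- the boundary term vanishes
    have hGD : ∀ t : ℝ, HasDerivAt (fun s => 2 * U1 (R, s) * A (R, s) * U2 (R, s))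
        (((2 * U1T (R, t)) * A (R, t) + (2 * U1 (R, t)) * A2 (R, t)) * U2 (R, t)
          + ((2 * U1 (R, t)) * A (R, t)) * U2T (R, t)) t :=
      fun t => (((pd2 hU1d R t).const_mul 2).mul (pd2 hAd R t)).mul (pd2 hU2d R t)
    have hzero : (∫ θ in (0:ℝ)..(2 * π), (((2 * U1T (R, θ)) * A (R, θ)
          + (2 * U1 (R, θ)) * A2 (R, θ)) * U2 (R, θ)
        + ((2 * U1 (R, θ)) * A (R, θ)) * U2T (R, θ))) = 0 := by
      rw [intervalIntegral.integral_eq_sub_of_hasDerivAt (fun t _ => hGD t)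
        (cGD.intervalIntegrable _ _)]
      have h2 : (2 * π : ℝ) = 0 + 2 * π := (zero_add _).symm
      rw [h2, hper1, hper2, hperA]
      exact sub_self _
    -- put everything together
    rw [(key R).deriv]
    have hsplit : (∫ θ in (0:ℝ)..(2 * π), D (R, θ))
        = (∫ θ in (0:ℝ)..(2 * π), (((2 * U1T (R, θ)) * A (R, θ)
              + (2 * U1 (R, θ)) * A2 (R, θ)) * U2 (R, θ)
            + ((2 * U1 (R, θ)) * A (R, θ)) * U2T (R, θ)))
          + ∫ θ in (0:ℝ)..(2 * π), (-(K ^ 2 / (2 * R ^ 3)) * (Eu (R, θ) * Real.exp (2 * η R θ))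
            - (2 / R) * ((A (R, θ))⁻¹ * (U1 (R, θ)) ^ 2)) := by
      rw [← intervalIntegral.integral_add (cGD.intervalIntegrable _ _)
        (g := fun θ => -(K ^ 2 / (2 * R ^ 3)) * (Eu (R, θ) * Real.exp (2 * η R θ))
          - (2 / R) * ((A (R, θ))⁻¹ * (U1 (R, θ)) ^ 2))
        ((cf1.sub cf2).intervalIntegrable _ _)]
      exact intervalIntegral.integral_congr fun θ _ => hpoint R hR θ
    rw [hsplit, hzero, zero_add,
      intervalIntegral.integral_sub (cf1.intervalIntegrable _ _) (cf2.intervalIntegrable _ _),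
      intervalIntegral.integral_const_mul, intervalIntegral.integral_const_mul]
    have e1 : (∫ θ in (0:ℝ)..(2 * π), Eu (R, θ) * Real.exp (2 * η R θ))
        = ∫ θ in (0:ℝ)..(2 * π), E R θ * Real.exp (2 * η R θ) :=
      intervalIntegral.integral_congr fun θ _ => by rw [hEEu]
    have e2 : (∫ θ in (0:ℝ)..(2 * π), (A (R, θ))⁻¹ * (U1 (R, θ)) ^ 2)
        = ∫ θ in (0:ℝ)..(2 * π), (a R θ)⁻¹ * (deriv (fun r => U r θ) R) ^ 2 :=
      intervalIntegral.integral_congr fun θ _ => by rw [hdU1]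
    rw [e1, e2]
  refine ⟨hformula, ?_⟩
  -- monotonicity
  have hdiff : Differentiable ℝ 𝓔 := fun x => (key x).differentiableAt
  apply antitoneOn_of_deriv_nonpos (convex_Ici R₀) hdiff.continuous.continuousOn
    (fun x _ => (hdiff x).differentiableWithinAt)
  intro x hx
  rw [interior_Ici] at hx
  have hx' : x ∈ Set.Ici R₀ := Set.mem_Ici.mpr (le_of_lt hx)
  have hxpos : 0 < x := lt_trans hR₀ hx
  rw [hformula x hx']
  have h1 : 0 ≤ ∫ θ in (0:ℝ)..(2 * π), E x θ * Real.exp (2 * η x θ) := by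
    apply intervalIntegral.integral_nonneg (by positivity)
    intro u _
    have hau := hapos x u
    have h0 : (0:ℝ) ≤ (a x u)⁻¹ := inv_nonneg.mpr hau.le
    rw [hE]
    exact mul_nonneg (add_nonneg (mul_nonneg h0 (sq_nonneg _))
      (mul_nonneg hau.le (sq_nonneg _))) (Real.exp_pos _).le
  have h2 : 0 ≤ ∫ θ in (0:ℝ)..(2 * π), (a x θ)⁻¹ * (deriv (fun r => U r θ) x) ^ 2 := by
    apply intervalIntegral.integral_nonneg (by positivity)
    intro u _
    exact mul_nonneg (inv_nonneg.mpr (hapos x u).le) (sq_nonneg _)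
  have c1 : (0:ℝ) ≤ K ^ 2 / (2 * x ^ 3) := by positivity
  have c2 : (0:ℝ) ≤ 2 / x := by positivity
  nlinarith [mul_nonneg c1 h1, mul_nonneg c2 h2]
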